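/- Let A be an n×n complex Hermitian matrix with 0 ⪯ A ⪯ I whose diagonal entries all satisfy A_{ii} ≤ δ for some 0 ≤ δ ≤ 1. Then for every real b > 1 and every i ∈ {1,…,n}: ((bI − A)^{-1})_{ii} ≤ δ/(b−1) + (1−δ)/b. -/

import Mathlib

open Polynomial Matrix
open scoped ComplexOrder

lemma diag_entry_re {n : ℕ} (U : Matrix (Fin n) (Fin n) ℂ) (f : Fin n → ℝ) (i : Fin n) :
    ((U * Matrix.diagonal (fun k => (f k : ℂ)) * star U) i i).re
      = ∑ k, f k * Complex.normSq (U i k) := by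
  rw [Matrix.mul_apply, Complex.re_sum]
  congr 1
  ext k
  simp only [Matrix.mul_diagonal, Matrix.star_apply, Complex.star_def]
  have : U i k * (f k : ℂ) * (starRingEnd ℂ) (U i k)
      = ((f k * Complex.normSq (U i k) : ℝ) : ℂ) := by
    have h := Complex.mul_conj (U i k)
    push_cast
    rw [← h]; ring
  rw [this, Complex.ofReal_re]

/-- Barrier value estimate: for a positive contraction `A` with diagonal entries at most
`δ` and any real `b > 1`, the diagonal entries of `(bI - A)^{-1}` are at most
`δ/(b-1) + (1-δ)/b`. -/
theorem resolvent_diagonal_bound {n : ℕ} (δ : ℝ) (hδ0 : 0 ≤ δ) (hδ1 : δ ≤ 1)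
    (A : Matrix (Fin n) (Fin n) ℂ)
    (hA : A.PosSemidef) (hA1 : ((1 : Matrix (Fin n) (Fin n) ℂ) - A).PosSemidef)
    (hdiag : ∀ i, (A i i).re ≤ δ)
    (b : ℝ) (hb : 1 < b) (i : Fin n) :
    ((((b : ℂ) • (1 : Matrix (Fin n) (Fin n) ℂ) - A)⁻¹) i i).re
      ≤ δ / (b - 1) + (1 - δ) / b := by
  have H : A.IsHermitian := hA.1
  set U : Matrix (Fin n) (Fin n) ℂ := (H.eigenvectorUnitary : Matrix (Fin n) (Fin n) ℂ) with hU
  set μ : Fin n → ℝ := H.eigenvalues with hμ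
  have hUU : U * star U = 1 := Matrix.mem_unitaryGroup_iff.mp H.eigenvectorUnitary.2
  have hUU' : star U * U = 1 := Matrix.mem_unitaryGroup_iff'.mp H.eigenvectorUnitary.2
  have hspec : A = U * Matrix.diagonal (fun k => (μ k : ℂ)) * star U := H.spectral_theorem
  -- eigenvalue bounds
  have hμ0 : ∀ k, 0 ≤ μ k := hA.eigenvalues_nonneg
  have hμ1 : ∀ k, μ k ≤ 1 := by
    intro k
    have hP : ((star U) * ((1 : Matrix (Fin n) (Fin n) ℂ) - A) * U).PosSemidef := by
      simpa [Matrix.star_eq_conjTranspose] using hA1.conjTranspose_mul_mul_same U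
    have hPeq : (star U) * ((1 : Matrix (Fin n) (Fin n) ℂ) - A) * U
        = 1 - Matrix.diagonal (fun k => (μ k : ℂ)) := by
      rw [Matrix.mul_sub, Matrix.sub_mul, Matrix.mul_one, hUU', (show star U * A * U = Matrix.diagonal (fun k => (μ k : ℂ)) by rw [hspec, ← Matrix.mul_assoc, ← Matrix.mul_assoc, hUU', Matrix.one_mul, Matrix.mul_assoc, hUU', Matrix.mul_one])]
    have h0 : (0 : ℂ) ≤ ((1 : Matrix (Fin n) (Fin n) ℂ) - Matrix.diagonal (fun k => (μ k : ℂ))) k k := by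
      rw [← hPeq]
      have := hP.dotProduct_mulVec_nonneg (Pi.single k 1)
      simpa [Matrix.mulVec_single, dotProduct, Pi.single_apply, Finset.sum_ite_eq'] using this
    have : 0 ≤ 1 - μ k := by
      have := (Complex.le_def.mp h0).1
      simpa [Matrix.one_apply, Matrix.diagonal_apply_eq] using this
    linarith
  -- the resolvent
  have hbpos : (0:ℝ) < b := by linarith
  have hb1 : (0:ℝ) < b - 1 := by linarith
  have hbμ : ∀ k, 0 < b - μ k := fun k => by have := hμ1 k; linarith
  have hBd : (b : ℂ) • (1 : Matrix (Fin n) (Fin n) ℂ) - A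
      = U * Matrix.diagonal (fun k => ((b - μ k : ℝ) : ℂ)) * star U := by
    have h1 : (b : ℂ) • (1 : Matrix (Fin n) (Fin n) ℂ)
        = U * ((b : ℂ) • (1 : Matrix (Fin n) (Fin n) ℂ)) * star U := by
      rw [Matrix.mul_smul, Matrix.mul_one, Matrix.smul_mul, hUU]
    rw [h1]
    rw [hspec]
    rw [← Matrix.sub_mul, ← Matrix.mul_sub]
    congr 1
    congr 1
    rw [Matrix.smul_one_eq_diagonal, Matrix.diagonal_sub]
    congr 1
    ext k
    push_cast
    ring
  have hinv : ((b : ℂ) • (1 : Matrix (Fin n) (Fin n) ℂ) - A)⁻¹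
      = U * Matrix.diagonal (fun k => (((b - μ k)⁻¹ : ℝ) : ℂ)) * star U := by
    apply Matrix.inv_eq_right_inv
    rw [hBd]
    calc U * Matrix.diagonal (fun k => ((b - μ k : ℝ) : ℂ)) * star U *
          (U * Matrix.diagonal (fun k => (((b - μ k)⁻¹ : ℝ) : ℂ)) * star U)
        = U * (Matrix.diagonal (fun k => ((b - μ k : ℝ) : ℂ)) * (star U * U) *
            Matrix.diagonal (fun k => (((b - μ k)⁻¹ : ℝ) : ℂ))) * star U := by
          simp only [Matrix.mul_assoc]
      _ = 1 := by
          rw [hUU', Matrix.mul_one, Matrix.diagonal_mul_diagonal]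
          have : (fun k => ((b - μ k : ℝ) : ℂ) * (((b - μ k)⁻¹ : ℝ) : ℂ)) = fun _ => (1:ℂ) := by
            ext k
            rw [← Complex.ofReal_mul, mul_inv_cancel₀ (hbμ k).ne']
            simp
          rw [this, Matrix.diagonal_one, Matrix.mul_one, hUU]
  -- weights
  set w : Fin n → ℝ := fun k => Complex.normSq (U i k) with hw
  have hw0 : ∀ k, 0 ≤ w k := fun k => Complex.normSq_nonneg _
  have hw1 : ∑ k, w k = 1 := by
    have h1 : ((U * Matrix.diagonal (fun _ : Fin n => ((1:ℝ) : ℂ)) * star U) i i).re = 1 := by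
      simp only [Complex.ofReal_one, Matrix.diagonal_one, Matrix.mul_one, hUU,
        Matrix.one_apply_eq, Complex.one_re]
    rw [diag_entry_re U (fun _ => (1:ℝ)) i] at h1
    simpa using h1
  have hAii : (A i i).re = ∑ k, μ k * w k := by
    conv_lhs => rw [hspec]
    exact diag_entry_re U μ i
  have hRii : ((((b : ℂ) • (1 : Matrix (Fin n) (Fin n) ℂ) - A)⁻¹) i i).re
      = ∑ k, (b - μ k)⁻¹ * w k := by
    rw [hinv]
    exact diag_entry_re U (fun k => (b - μ k)⁻¹) i
  -- arithmetic
  rw [hRii]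
  have key : ∑ k, (b - μ k)⁻¹ * w k ≤ ∑ k, (1/b + μ k / (b*(b-1))) * w k := by
    apply Finset.sum_le_sum
    intro k _
    apply mul_le_mul_of_nonneg_right _ (hw0 k)
    rw [inv_eq_one_div, div_add_div _ _ hbpos.ne' (by positivity), div_le_div_iff₀ (hbμ k) (by positivity)]
    have h0 := hμ0 k; have h1 := hμ1 k
    nlinarith [mul_nonneg (mul_nonneg hbpos.le h0) (sub_nonneg.mpr h1)]
  refine key.trans ?_
  have expand : ∑ k, (1/b + μ k / (b*(b-1))) * w k
      = (1/b) * ∑ k, w k + (1/(b*(b-1))) * ∑ k, μ k * w k := by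
    rw [Finset.mul_sum, Finset.mul_sum, ← Finset.sum_add_distrib]
    congr 1; ext k; field_simp
  rw [expand, hw1, ← hAii, mul_one]
  have h2 : (1:ℝ)/(b*(b-1)) * (A i i).re ≤ (1:ℝ)/(b*(b-1)) * δ := by
    apply mul_le_mul_of_nonneg_left (hdiag i) (by positivity)
  have : δ / (b - 1) + (1 - δ) / b = 1/b + 1/(b*(b-1)) * δ := by
    field_simp; ring
  rw [this]
  linarith
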